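/- (Monge–Hachette; the orthoptic/Monge sphere.) If three mutually perpendicular planes are tangent to an ellipsoid, their common point lies on the sphere centered at the center of the ellipsoid with radius √(a² + b² + c²): let a, b, c > 0 and E = {(x, y, z) ∈ ℝ³ : x²/a² + y²/b² + z²/c² = 1}. Let n₁, n₂, n₃ be an orthonormal basis of ℝ³, let d₁, d₂, d₃ ∈ ℝ, and suppose each plane Pᵢ = {v ∈ ℝ³ : ⟨v, nᵢ⟩ = dᵢ} intersects E in exactly one point. Then the unique common point m = d₁ • n₁ + d₂ • n₂ + d₃ • n₃ of the three planes satisfies ‖m‖² = a² + b² + c². -/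

import Mathlib

open scoped RealInnerProductSpace

private lemma monge_inner3 (x y : EuclideanSpace ℝ (Fin 3)) :
    ⟪x, y⟫ = x 0 * y 0 + x 1 * y 1 + x 2 * y 2 := by
  simp [PiLp.inner_apply, Fin.sum_univ_three, RCLike.inner_apply, mul_comm]

private lemma monge_keyQ (a b c d n0 n1 n2 v0 v1 v2 : ℝ)
    (ha : a ≠ 0) (hb : b ≠ 0) (hc : c ≠ 0)
    (hr : a^2*n0^2 + b^2*n1^2 + c^2*n2^2 ≠ 0)
    (hQ : v0^2/a^2 + v1^2/b^2 + v2^2/c^2 = 1)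
    (hP : v0*n0 + v1*n1 + v2*n2 = d) :
    (2*(d*a^2*n0/(a^2*n0^2 + b^2*n1^2 + c^2*n2^2)) - v0)^2/a^2
    + (2*(d*b^2*n1/(a^2*n0^2 + b^2*n1^2 + c^2*n2^2)) - v1)^2/b^2
    + (2*(d*c^2*n2/(a^2*n0^2 + b^2*n1^2 + c^2*n2^2)) - v2)^2/c^2 = 1 := by
  field_simp at hQ ⊢
  linear_combination (a^2*n0^2 + b^2*n1^2 + c^2*n2^2)^2 * hQ
    - 4*d*(a^2*n0^2 + b^2*n1^2 + c^2*n2^2) * a^2*b^2*c^2 * hP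

private lemma monge_keyP (a b c d n0 n1 n2 v0 v1 v2 : ℝ)
    (hr : a^2*n0^2 + b^2*n1^2 + c^2*n2^2 ≠ 0)
    (hP : v0*n0 + v1*n1 + v2*n2 = d) :
    (2*(d*a^2*n0/(a^2*n0^2 + b^2*n1^2 + c^2*n2^2)) - v0)*n0
    + (2*(d*b^2*n1/(a^2*n0^2 + b^2*n1^2 + c^2*n2^2)) - v1)*n1
    + (2*(d*c^2*n2/(a^2*n0^2 + b^2*n1^2 + c^2*n2^2)) - v2)*n2 = d := by
  field_simp
  linear_combination (-(a^2*n0^2 + b^2*n1^2 + c^2*n2^2)) * hP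

private lemma monge_keyD (a b c d n0 n1 n2 : ℝ)
    (ha : a ≠ 0) (hb : b ≠ 0) (hc : c ≠ 0)
    (hr : a^2*n0^2 + b^2*n1^2 + c^2*n2^2 ≠ 0)
    (hQ : (d*a^2*n0/(a^2*n0^2 + b^2*n1^2 + c^2*n2^2))^2/a^2
      + (d*b^2*n1/(a^2*n0^2 + b^2*n1^2 + c^2*n2^2))^2/b^2
      + (d*c^2*n2/(a^2*n0^2 + b^2*n1^2 + c^2*n2^2))^2/c^2 = 1) :
    d^2 = a^2*n0^2 + b^2*n1^2 + c^2*n2^2 := by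
  field_simp at hQ
  have h2 : (a^2*n0^2 + b^2*n1^2 + c^2*n2^2)^5 * (a^2*b^2*c^2) ≠ 0 := by positivity
  refine mul_right_cancel₀ h2 ?_
  linear_combination (a^2*n0^2 + b^2*n1^2 + c^2*n2^2)^5 * (a^2*b^2*c^2) * hQ

/-- The tangency condition: if the plane `⟪v, n⟫ = d` (with `n` a unit vector) meets the
ellipsoid in exactly one point, then `d² = a²n₀² + b²n₁² + c²n₂²`. -/
private lemma monge_tangent_eq (a b c : ℝ) (ha : 0 < a) (hb : 0 < b) (hc : 0 < c)
    (n : EuclideanSpace ℝ (Fin 3)) (hn : ‖n‖ = 1) (d : ℝ)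
    (h : ∃! v : EuclideanSpace ℝ (Fin 3),
      (v 0) ^ 2 / a ^ 2 + (v 1) ^ 2 / b ^ 2 + (v 2) ^ 2 / c ^ 2 = 1 ∧ ⟪v, n⟫ = d) :
    d^2 = a^2*(n 0)^2 + b^2*(n 1)^2 + c^2*(n 2)^2 := by
  have ha' := ha.ne'
  have hb' := hb.ne'
  have hc' := hc.ne'
  have hns : (n 0)^2 + (n 1)^2 + (n 2)^2 = 1 := by
    have := real_inner_self_eq_norm_sq n
    rw [monge_inner3, hn] at this
    linear_combination this
  have hr : a^2*(n 0)^2 + b^2*(n 1)^2 + c^2*(n 2)^2 ≠ 0 := by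
    intro hzero
    have h0 : (a * n 0)^2 = 0 := le_antisymm
      (by nlinarith [sq_nonneg (b * n 1), sq_nonneg (c * n 2)]) (sq_nonneg _)
    have h1 : (b * n 1)^2 = 0 := le_antisymm
      (by nlinarith [sq_nonneg (a * n 0), sq_nonneg (c * n 2)]) (sq_nonneg _)
    have h2 : (c * n 2)^2 = 0 := le_antisymm
      (by nlinarith [sq_nonneg (a * n 0), sq_nonneg (b * n 1)]) (sq_nonneg _)
    have e0 : n 0 = 0 := by
      have := pow_eq_zero_iff (n := 2) (by norm_num) |>.mp h0
      rcases mul_eq_zero.mp this with h | h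
      · exact absurd h ha'
      · exact h
    have e1 : n 1 = 0 := by
      have := pow_eq_zero_iff (n := 2) (by norm_num) |>.mp h1
      rcases mul_eq_zero.mp this with h | h
      · exact absurd h hb'
      · exact h
    have e2 : n 2 = 0 := by
      have := pow_eq_zero_iff (n := 2) (by norm_num) |>.mp h2
      rcases mul_eq_zero.mp this with h | h
      · exact absurd h hc'
      · exact h
    rw [e0, e1, e2] at hns
    norm_num at hns
  obtain ⟨v, ⟨hQ, hP⟩, huniq⟩ := h
  rw [monge_inner3] at hP
  set r2 := a^2*(n 0)^2 + b^2*(n 1)^2 + c^2*(n 2)^2 with hr2def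
  set v' : EuclideanSpace ℝ (Fin 3) :=
    WithLp.toLp 2 ![2*(d*a^2*(n 0)/r2) - v 0, 2*(d*b^2*(n 1)/r2) - v 1, 2*(d*c^2*(n 2)/r2) - v 2] with hv'def
  have hv'0 : v' 0 = 2*(d*a^2*(n 0)/r2) - v 0 := rfl
  have hv'1 : v' 1 = 2*(d*b^2*(n 1)/r2) - v 1 := rfl
  have hv'2 : v' 2 = 2*(d*c^2*(n 2)/r2) - v 2 := rfl
  have hmem : (v' 0) ^ 2 / a ^ 2 + (v' 1) ^ 2 / b ^ 2 + (v' 2) ^ 2 / c ^ 2 = 1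
      ∧ ⟪v', n⟫ = d := by
    rw [monge_inner3, hv'0, hv'1, hv'2]
    exact ⟨monge_keyQ a b c d (n 0) (n 1) (n 2) (v 0) (v 1) (v 2) ha' hb' hc' hr hQ hP,
      monge_keyP a b c d (n 0) (n 1) (n 2) (v 0) (v 1) (v 2) hr hP⟩
  have heq : v' = v := huniq v' hmem
  have e0 : v 0 = d*a^2*(n 0)/r2 := by
    have := congrArg (fun w : EuclideanSpace ℝ (Fin 3) => w 0) heq
    rw [hv'0] at this
    linarith [this]
  have e1 : v 1 = d*b^2*(n 1)/r2 := by
    have := congrArg (fun w : EuclideanSpace ℝ (Fin 3) => w 1) heq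
    rw [hv'1] at this
    linarith [this]
  have e2 : v 2 = d*c^2*(n 2)/r2 := by
    have := congrArg (fun w : EuclideanSpace ℝ (Fin 3) => w 2) heq
    rw [hv'2] at this
    linarith [this]
  rw [e0, e1, e2] at hQ
  exact monge_keyD a b c d (n 0) (n 1) (n 2) ha' hb' hc' hr hQ

set_option maxHeartbeats 1000000 in
/-- Monge–Hachette (the orthoptic/Monge sphere): if three mutually perpendicular planes
are each tangent to the ellipsoid `x²/a² + y²/b² + z²/c² = 1` (i.e. each meets it in
exactly one point), then their common point `m = d₁•n₁ + d₂•n₂ + d₃•n₃` satisfies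
`‖m‖² = a² + b² + c²`. -/
theorem monge_sphere (a b c : ℝ) (ha : 0 < a) (hb : 0 < b) (hc : 0 < c)
    (n₁ n₂ n₃ : EuclideanSpace ℝ (Fin 3)) (hn : Orthonormal ℝ ![n₁, n₂, n₃])
    (d₁ d₂ d₃ : ℝ)
    (h₁ : ∃! v : EuclideanSpace ℝ (Fin 3),
      (v 0) ^ 2 / a ^ 2 + (v 1) ^ 2 / b ^ 2 + (v 2) ^ 2 / c ^ 2 = 1 ∧ ⟪v, n₁⟫ = d₁)
    (h₂ : ∃! v : EuclideanSpace ℝ (Fin 3),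
      (v 0) ^ 2 / a ^ 2 + (v 1) ^ 2 / b ^ 2 + (v 2) ^ 2 / c ^ 2 = 1 ∧ ⟪v, n₂⟫ = d₂)
    (h₃ : ∃! v : EuclideanSpace ℝ (Fin 3),
      (v 0) ^ 2 / a ^ 2 + (v 1) ^ 2 / b ^ 2 + (v 2) ^ 2 / c ^ 2 = 1 ∧ ⟪v, n₃⟫ = d₃) :
    ‖d₁ • n₁ + d₂ • n₂ + d₃ • n₃‖ ^ 2 = a ^ 2 + b ^ 2 + c ^ 2 := by
  have hn1 : ‖n₁‖ = 1 := by simpa using hn.1 0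
  have hn2 : ‖n₂‖ = 1 := by simpa using hn.1 1
  have hn3 : ‖n₃‖ = 1 := by simpa using hn.1 2
  have e₁ := monge_tangent_eq a b c ha hb hc n₁ hn1 d₁ h₁
  have e₂ := monge_tangent_eq a b c ha hb hc n₂ hn2 d₂ h₂
  have e₃ := monge_tangent_eq a b c ha hb hc n₃ hn3 d₃ h₃
  have ip := orthonormal_iff_ite.mp hn
  have r11 : n₁ 0 * n₁ 0 + n₁ 1 * n₁ 1 + n₁ 2 * n₁ 2 = 1 := by
    have := ip 0 0; rw [monge_inner3] at this; simpa using this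
  have r22 : n₂ 0 * n₂ 0 + n₂ 1 * n₂ 1 + n₂ 2 * n₂ 2 = 1 := by
    have := ip 1 1; rw [monge_inner3] at this; simpa using this
  have r33 : n₃ 0 * n₃ 0 + n₃ 1 * n₃ 1 + n₃ 2 * n₃ 2 = 1 := by
    have := ip 2 2; rw [monge_inner3] at this; simpa using this
  have r12 : n₁ 0 * n₂ 0 + n₁ 1 * n₂ 1 + n₁ 2 * n₂ 2 = 0 := by
    have := ip 0 1; rw [monge_inner3] at this; simpa using this
  have r13 : n₁ 0 * n₃ 0 + n₁ 1 * n₃ 1 + n₁ 2 * n₃ 2 = 0 := by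
    have := ip 0 2; rw [monge_inner3] at this; simpa using this
  have r23 : n₂ 0 * n₃ 0 + n₂ 1 * n₃ 1 + n₂ 2 * n₃ 2 = 0 := by
    have := ip 1 2; rw [monge_inner3] at this; simpa using this
  -- column orthonormality via `M * Mᵀ = 1 → Mᵀ * M = 1`
  set M : Matrix (Fin 3) (Fin 3) ℝ :=
    !![n₁ 0, n₁ 1, n₁ 2; n₂ 0, n₂ 1, n₂ 2; n₃ 0, n₃ 1, n₃ 2] with hM
  have hrow : M * M.transpose = 1 := by
    ext i j
    simp only [Matrix.mul_apply, Matrix.transpose_apply, Fin.sum_univ_three]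
    fin_cases i <;> fin_cases j <;>
      simp [M, Matrix.one_apply] <;>
      first
        | linear_combination r11 | linear_combination r22 | linear_combination r33
        | linear_combination r12 | linear_combination r13 | linear_combination r23
  have hcol := mul_eq_one_comm.mp hrow
  have c0 : n₁ 0 * n₁ 0 + n₂ 0 * n₂ 0 + n₃ 0 * n₃ 0 = 1 := by
    have := congrFun (congrFun hcol 0) 0
    simp only [Matrix.mul_apply, Matrix.transpose_apply, Fin.sum_univ_three] at this
    simp [M, Matrix.one_apply] at this
    linear_combination this
  have c1 : n₁ 1 * n₁ 1 + n₂ 1 * n₂ 1 + n₃ 1 * n₃ 1 = 1 := by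
    have := congrFun (congrFun hcol 1) 1
    simp only [Matrix.mul_apply, Matrix.transpose_apply, Fin.sum_univ_three] at this
    simp [M, Matrix.one_apply] at this
    linear_combination this
  have c2 : n₁ 2 * n₁ 2 + n₂ 2 * n₂ 2 + n₃ 2 * n₃ 2 = 1 := by
    have := congrFun (congrFun hcol 2) 2
    simp only [Matrix.mul_apply, Matrix.transpose_apply, Fin.sum_univ_three] at this
    simp [M, Matrix.one_apply] at this
    linear_combination this
  -- expand the norm of `m`
  have hm : ‖d₁ • n₁ + d₂ • n₂ + d₃ • n₃‖ ^ 2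
      = (d₁ * n₁ 0 + d₂ * n₂ 0 + d₃ * n₃ 0) * (d₁ * n₁ 0 + d₂ * n₂ 0 + d₃ * n₃ 0)
      + (d₁ * n₁ 1 + d₂ * n₂ 1 + d₃ * n₃ 1) * (d₁ * n₁ 1 + d₂ * n₂ 1 + d₃ * n₃ 1)
      + (d₁ * n₁ 2 + d₂ * n₂ 2 + d₃ * n₃ 2) * (d₁ * n₁ 2 + d₂ * n₂ 2 + d₃ * n₃ 2) := by
    rw [← real_inner_self_eq_norm_sq, monge_inner3]
    simp [PiLp.add_apply, PiLp.smul_apply, smul_eq_mul]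
  rw [hm]
  linear_combination d₁^2 * r11 + d₂^2 * r22 + d₃^2 * r33
    + 2*d₁*d₂ * r12 + 2*d₁*d₃ * r13 + 2*d₂*d₃ * r23
    + e₁ + e₂ + e₃ + a^2 * c0 + b^2 * c1 + c^2 * c2
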